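/- arXiv:2012.10547 — 3 statements merged into one kernel-verified Lean document; each statement's English description precedes it below -/
import Mathlib

section
/- (Correctness of SI-FEIP decryption.) Let G be a commutative group, g an element of G, η a natural number, s, x, y : Fin η → ℤ, and r : ℤ. Define the public key components h_i = g^{s_i}, the ciphertext ct_0 = g^r and ct_i = h_i^r · g^{x_i} for each i, and the functional key sk = ∑_i y_i · s_i. Then (∏_{i} ct_i^{y_i}) · ct_0^{−sk} = g^{∑_i x_i · y_i}, i.e., the decryption expression of the single-input functional encryption scheme for inner products equals g raised to the inner product ⟨x, y⟩. -/
lemma si_feip_prod_zpow {G : Type*} [CommGroup G] (g : G) {α : Type*}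
    (t : Finset α) (f : α → ℤ) : ∏ i ∈ t, g ^ f i = g ^ ∑ i ∈ t, f i := by
  induction t using Finset.cons_induction with
  | empty => simp
  | cons a t ha ih => simp [ih, zpow_add]

/-- Correctness of SI-FEIP decryption: with `hᵢ = g^{sᵢ}`, `ct₀ = g^r`,
`ctᵢ = hᵢ^r · g^{xᵢ}` and `sk = ∑ yᵢ·sᵢ`, the decryption expression
`(∏ ctᵢ^{yᵢ}) · ct₀^{−sk}` equals `g^{⟨x,y⟩}`. -/
theorem si_feip_decrypt_correct
    {G : Type*} [CommGroup G] (g : G) (η : ℕ)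
    (s x y : Fin η → ℤ) (r : ℤ) :
    (∏ i, ((g ^ s i) ^ r * g ^ x i) ^ y i) * (g ^ r) ^ (-(∑ i, y i * s i)) =
      g ^ (∑ i, x i * y i) := by
  simp only [← zpow_mul, mul_zpow, ← zpow_add, ← Finset.prod_mul_distrib,
    si_feip_prod_zpow, Finset.mul_sum]
  congr 1
  simp only [add_mul, Finset.sum_add_distrib]
  have : ∑ i, s i * r * y i = r * ∑ i, y i * s i := by
    rw [Finset.mul_sum]; exact Finset.sum_congr rfl fun i _ => by ring
  rw [this]; ring
end

section
/- (End-to-end correctness of the S2PHC protocol.) Let G be a commutative group and g an element of G of finite order q. Let X be an l × m integer matrix (the client pool's encoded data), W an m × k integer matrix (the server's encoded first-layer weights), s : Fin m → ℤ the master secret, r : Fin l → ℤ the encryption randomness, and f_b a natural number with 2·f_b < q such that |(X·W)_{i,j}| ≤ f_b for all i, j. Define for each row i the ciphertext ct0_i = g^{r_i} and ct_{i,t} = g^{s_t · r_i} · g^{X_{i,t}}, and for each column j of W the functional key sk_j = ∑_t W_{t,j} · s_t. Then for every i, j, the matrix-product entry (X·W)_{i,j} is the unique integer f with |f| ≤ f_b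 satisfying g^f = (∏_t ct_{i,t}^{W_{t,j}}) · ct0_i^{−sk_j}. Hence the server recovers exactly the matrix product Z = X·W from the ciphertexts and functional keys. -/
/-- End-to-end correctness of the S2PHC protocol: from the SI-FEIP ciphertexts
of the rows of `X` and the functional keys for the columns of `W`, each entry
of `X·W` is the unique integer `f` with `|f| ≤ f_b` matching the decryption
expression, provided `2·f_b` is less than the order of `g` and all entries of
`X·W` are bounded by `f_b`. -/
theorem s2phc_correct
    {G : Type*} [CommGroup G] (g : G) (q : ℕ) (hq : orderOf g = q)
    (l m k : ℕ)
    (X : Matrix (Fin l) (Fin m) ℤ) (W : Matrix (Fin m) (Fin k) ℤ)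
    (s : Fin m → ℤ) (r : Fin l → ℤ)
    (f_b : ℕ) (hfb : 2 * f_b < q)
    (hbound : ∀ (i : Fin l) (j : Fin k), |(X * W) i j| ≤ (f_b : ℤ)) :
    ∀ (i : Fin l) (j : Fin k) (f : ℤ),
      (|f| ≤ (f_b : ℤ) ∧
        g ^ f =
          (∏ t, (g ^ (s t * r i) * g ^ X i t) ^ W t j) *
            (g ^ r i) ^ (-(∑ t, W t j * s t))) ↔
      f = (X * W) i j := by
  intro i j f
  have hdec :
      (∏ t, (g ^ (s t * r i) * g ^ X i t) ^ W t j) *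
        (g ^ r i) ^ (-(∑ t, W t j * s t)) = g ^ ((X * W) i j) := by
    have h1 : ∀ t : Fin m,
        (g ^ (s t * r i) * g ^ X i t) ^ W t j
          = g ^ ((s t * r i + X i t) * W t j) := by
      intro t
      rw [← zpow_add, ← zpow_mul]
    have hps : ∀ (u : Finset (Fin m)) (a : Fin m → ℤ),
        (∏ t ∈ u, g ^ a t) = g ^ (∑ t ∈ u, a t) := by
      intro u a
      induction u using Finset.induction with
      | empty => simp
      | insert _ _ h ih => rw [Finset.prod_insert h, Finset.sum_insert h, ih, zpow_add]
    simp only [h1]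
    rw [hps, ← zpow_mul, ← zpow_add]
    congr 1
    rw [Matrix.mul_apply, mul_neg, Finset.mul_sum, ← sub_eq_add_neg,
      ← Finset.sum_sub_distrib]
    apply Finset.sum_congr rfl
    intro t _
    ring
  constructor
  · rintro ⟨hf, heq⟩
    rw [hdec] at heq
    have hdvd : ((orderOf g : ℤ)) ∣ f - (X * W) i j :=
      orderOf_dvd_sub_iff_zpow_eq_zpow.mpr heq
    have habs : |f - (X * W) i j| < (q : ℤ) := by
      calc |f - (X * W) i j| ≤ |f| + |(X * W) i j| := abs_sub _ _
        _ ≤ (f_b : ℤ) + (f_b : ℤ) := add_le_add hf (hbound i j)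
        _ = ((2 * f_b : ℕ) : ℤ) := by push_cast; ring
        _ < (q : ℤ) := by exact_mod_cast hfb
    rw [hq] at hdvd
    have := Int.eq_zero_of_abs_lt_dvd hdvd habs
    linarith
  · rintro rfl
    exact ⟨hbound i j, by rw [hdec]⟩
end

section
/- (Correctness of MI-FEIP decryption.) Let G be a commutative group, g an element of G, n a natural number, and η : Fin n → ℕ. Let a : Fin 2 → ℤ; for each party i let W_i be an η_i × 2 integer matrix, u_i, x_i, y_i : Fin η_i → ℤ, and r_i : ℤ. Define the ciphertext components t_{i,ℓ} = g^{a_ℓ · r_i} for ℓ in Fin 2, and c_{i,j} = g^{x_{i,j}} · g^{u_{i,j}} · g^{(∑_ℓ W_{i,j,ℓ} · a_ℓ) · r_i}; define the functional key components d_{i,ℓ} = ∑_j y_{i,j} · W_{i,j,ℓ} and z = ∑_i ∑_j y_{i,j} · u_{i,j}. Then (∏_i (∏_j c_{i,j}^{y_{i,j}}) · (∏_ℓ t_{i,ℓ}^{d_{i,ℓ}})^{−1}) · g^{−z} = g^{∑_i ∑_j y_{i,j} · x_{i,j}}, i.e., the decryption expression of the multi-input functional encryption scheme equals g raised to the multi-input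 inner product f_MIIP((x_1, ..., x_n), y). -/
theorem my_zpow_sum {G : Type*} [CommGroup G] (g : G) {ι : Type*} (s : Finset ι) (f : ι → ℤ) :
    ∏ i ∈ s, g ^ f i = g ^ ∑ i ∈ s, f i := by
  induction s using Finset.cons_induction with
  | empty => simp
  | cons a s ha ih => rw [Finset.prod_cons, Finset.sum_cons, ih, zpow_add]

/-- Correctness of MI-FEIP decryption: with ciphertext components
`t_{i,ℓ} = g^{a_ℓ·r_i}`, `c_{i,j} = g^{x_{i,j}}·g^{u_{i,j}}·g^{(∑_ℓ W_{i,j,ℓ}·a_ℓ)·r_i}`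
and functional key `d_{i,ℓ} = ∑_j y_{i,j}·W_{i,j,ℓ}`, `z = ∑_i ∑_j y_{i,j}·u_{i,j}`,
the decryption expression equals `g` raised to the multi-input inner product. -/
theorem mi_feip_decrypt_correct
    {G : Type*} [CommGroup G] (g : G) (n : ℕ) (η : Fin n → ℕ)
    (a : Fin 2 → ℤ)
    (W : (i : Fin n) → Fin (η i) → Fin 2 → ℤ)
    (u x y : (i : Fin n) → Fin (η i) → ℤ)
    (r : Fin n → ℤ) :
    (∏ i, (∏ j, (g ^ x i j * g ^ u i j *
            g ^ ((∑ ℓ, W i j ℓ * a ℓ) * r i)) ^ y i j) *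
          (∏ ℓ, (g ^ (a ℓ * r i)) ^ (∑ j, y i j * W i j ℓ))⁻¹) *
        g ^ (-(∑ i, ∑ j, y i j * u i j)) =
      g ^ (∑ i, ∑ j, y i j * x i j) := by
  simp only [← zpow_add, ← zpow_mul, my_zpow_sum, ← zpow_neg]
  congr 1
  rw [← sub_eq_add_neg, ← Finset.sum_sub_distrib]
  refine Finset.sum_congr rfl fun i _ => ?_
  have h : ∑ ℓ : Fin 2, a ℓ * r i * ∑ j, y i j * W i j ℓ
      = ∑ j, (∑ ℓ : Fin 2, W i j ℓ * a ℓ) * r i * y i j := by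
    simp_rw [Finset.mul_sum, Finset.sum_mul]
    rw [Finset.sum_comm]
    exact Finset.sum_congr rfl fun j _ => Finset.sum_congr rfl fun ℓ _ => by ring
  rw [h]
  simp_rw [add_mul]
  rw [Finset.sum_add_distrib, Finset.sum_add_distrib]
  ring_nf
  simp [mul_comm]
end
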